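/- Let PA[−1,1] denote the continuous piecewise affine functions on [−1,1], i.e. those f ∈ C([−1,1], ℝ) for which there exist points −1 = t₀ < t₁ < … < t_m = 1 such that f is affine on each interval [t_{j−1}, t_j]. Let q ∈ C([−1,1], ℝ) be q(t) := t², and let X := {f + λ·q | f ∈ PA[−1,1], λ ∈ ℝ} ⊆ C([−1,1], ℝ), ordered pointwise. Then X satisfies property (P): for every n ≥ 1 and all b₁, …, b_n ∈ X with 0 < bᵢ for each i and with min(b₁, …, b_n) ≠ 0 (the pointwise minimum in C([−1,1], ℝ)), there exists x ∈ X with 0 < x and x ≤ bᵢ for all i = 1, …, n. -/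

import Mathlib

open Set

/-- `f ∈ C([-1,1], ℝ)` is piecewise affine: there are points
`-1 = t₀ < t₁ < … < t_m = 1` such that `f` is affine on each `[t_{j-1}, t_j]`. -/
def PA14 (f : C(Icc (-1:ℝ) 1, ℝ)) : Prop :=
  ∃ m : ℕ, 0 < m ∧ ∃ t : ℕ → ℝ, t 0 = -1 ∧ t m = 1 ∧
    (∀ j < m, t j < t (j + 1)) ∧
    ∀ j < m, ∃ a c : ℝ, ∀ s : Icc (-1:ℝ) 1,
      t j ≤ (s : ℝ) → (s : ℝ) ≤ t (j + 1) → f s = a * (s : ℝ) + c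

/-- The function `q(t) = t²` on `[-1,1]`. -/
noncomputable def q14 : C(Icc (-1:ℝ) 1, ℝ) := ⟨fun t => (t : ℝ) ^ 2, by fun_prop⟩

/-- Membership in `X = PA[-1,1] ⊕ ℝ·q`. -/
def MemX14 (g : C(Icc (-1:ℝ) 1, ℝ)) : Prop :=
  ∃ (f : C(Icc (-1:ℝ) 1, ℝ)) (lam : ℝ), PA14 f ∧ g = f + lam • q14

/-- `X` satisfies property (P): for every `n ≥ 1` and all
`b₁, …, b_n ∈ X` with `0 < bᵢ` for each `i` and `min(b₁, …, b_n) ≠ 0` (pointwise minimum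
in `C([-1,1], ℝ)`), there exists `x ∈ X` with `0 < x` and `x ≤ bᵢ` for all `i`. -/
theorem statement14 :
    ∀ (n : ℕ) (b : Fin (n + 1) → C(Icc (-1:ℝ) 1, ℝ)),
      (∀ i, MemX14 (b i)) → (∀ i, 0 < b i) →
      Finset.univ.inf' Finset.univ_nonempty b ≠ 0 →
      ∃ x : C(Icc (-1:ℝ) 1, ℝ), MemX14 x ∧ 0 < x ∧ ∀ i, x ≤ b i := by
  intro n b _hmem hpos hne
  set g : C(Icc (-1:ℝ) 1, ℝ) := Finset.univ.inf' Finset.univ_nonempty b with hg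
  have hg_le : ∀ i, g ≤ b i := fun i => Finset.inf'_le _ (Finset.mem_univ i)
  have hg_nonneg : (0 : C(Icc (-1:ℝ) 1, ℝ)) ≤ g :=
    Finset.le_inf' _ _ (fun i _ => (hpos i).le)
  obtain ⟨t₀, ht₀⟩ : ∃ t₀, 0 < g t₀ := by
    by_contra h
    push_neg at h
    exact hne (le_antisymm (fun s => h s) hg_nonneg)
  set ε : ℝ := g t₀ / 2 with hε
  have hεpos : 0 < ε := by positivity
  obtain ⟨δ₀, hδ₀pos, hδ₀⟩ := Metric.continuousAt_iff.mp (g.continuous.continuousAt (x := t₀)) ε hεpos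
  set δ₁ : ℝ := min δ₀ 1 with hδ₁def
  have hδ₁pos : 0 < δ₁ := lt_min hδ₀pos one_pos
  have hδ₁le1 : δ₁ ≤ 1 := min_le_right _ _
  set u : ℝ := (t₀ : ℝ) with hu
  have hu1 : -1 ≤ u := t₀.2.1
  have hu2 : u ≤ 1 := t₀.2.2
  set p : ℝ := if u ≤ 0 then u + δ₁ / 2 else u - δ₁ / 2 with hp
  set δ : ℝ := δ₁ / 4 with hδ
  have hδpos : 0 < δ := by positivity
  have hp1 : -1 < p - δ := by
    rw [hp]; split_ifs with h
    · simp only [hδ]; linarith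
    · push_neg at h; simp only [hδ]; linarith
  have hp2 : p + δ < 1 := by
    rw [hp]; split_ifs with h
    · simp only [hδ]; linarith
    · simp only [hδ]; linarith
  have hball : ∀ s : ℝ, |s - p| ≤ δ → |s - u| < δ₁ := by
    intro s hs
    have h1 : |p - u| ≤ δ₁ / 2 := by
      rw [hp]; split_ifs with h
      · rw [show u + δ₁ / 2 - u = δ₁ / 2 by ring, abs_of_nonneg (by positivity)]
      · rw [show u - δ₁ / 2 - u = -(δ₁ / 2) by ring, abs_neg, abs_of_nonneg (by positivity)]
    calc |s - u| ≤ |s - p| + |p - u| := by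
          have := abs_sub_le s p u; linarith [abs_sub_le s p u]
      _ ≤ δ + δ₁ / 2 := add_le_add hs h1
      _ < δ₁ := by rw [hδ]; linarith
  have hkey : ∀ s : Icc (-1:ℝ) 1, |(s:ℝ) - p| ≤ δ → ε < g s := by
    intro s hs
    have hd : dist s t₀ < δ₀ := by
      rw [Subtype.dist_eq, Real.dist_eq]
      exact lt_of_lt_of_le (hball _ hs) (min_le_left _ _)
    have := hδ₀ hd
    rw [Real.dist_eq, abs_sub_lt_iff] at this
    simp only [hε] at *
    linarith [this.2]
  -- the tent function
  set x : C(Icc (-1:ℝ) 1, ℝ) :=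
    ⟨fun s => (ε / δ) * max 0 (δ - |(s:ℝ) - p|), by fun_prop⟩ with hx
  have hxval : ∀ s : Icc (-1:ℝ) 1, x s = (ε / δ) * max 0 (δ - |(s:ℝ) - p|) := fun s => rfl
  have hxnonneg : ∀ s : Icc (-1:ℝ) 1, 0 ≤ x s := by
    intro s; rw [hxval]
    exact mul_nonneg (by positivity) (le_max_left _ _)
  have hpmem : p ∈ Icc (-1:ℝ) 1 := ⟨by linarith, by linarith⟩
  have hxp : x ⟨p, hpmem⟩ = ε := by
    rw [hxval]; simp
    field_simp
    exact max_eq_right hδpos.le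
  refine ⟨x, ?_, ?_, ?_⟩
  · -- MemX14
    refine ⟨x, 0, ?_, by simp⟩
    refine ⟨4, by norm_num, fun j => match j with
      | 0 => -1 | 1 => p - δ | 2 => p | 3 => p + δ | _ => 1, rfl, rfl, ?_, ?_⟩
    · intro j hj
      interval_cases j <;> simp <;> linarith
    · intro j hj
      interval_cases j
      · refine ⟨0, 0, fun s h1 h2 => ?_⟩
        have h2' : (s:ℝ) ≤ p - δ := h2
        rw [hxval]
        have : δ ≤ |(s:ℝ) - p| := by
          rw [abs_sub_comm, abs_of_nonneg (by linarith)]; linarith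
        rw [max_eq_left (by linarith)]; ring
      · refine ⟨ε / δ, (ε / δ) * (δ - p), fun s h1 h2 => ?_⟩
        have h1' : p - δ ≤ (s:ℝ) := h1
        have h2' : (s:ℝ) ≤ p := h2
        rw [hxval]
        rw [abs_sub_comm, abs_of_nonneg (by linarith : (0:ℝ) ≤ p - (s:ℝ))]
        rw [max_eq_right (by linarith)]; ring
      · refine ⟨-(ε / δ), (ε / δ) * (δ + p), fun s h1 h2 => ?_⟩
        have h1' : p ≤ (s:ℝ) := h1
        have h2' : (s:ℝ) ≤ p + δ := h2
        rw [hxval]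
        rw [abs_of_nonneg (by linarith : (0:ℝ) ≤ (s:ℝ) - p)]
        rw [max_eq_right (by linarith)]; ring
      · refine ⟨0, 0, fun s h1 h2 => ?_⟩
        have h1' : p + δ ≤ (s:ℝ) := h1
        rw [hxval]
        have : δ ≤ |(s:ℝ) - p| := by
          rw [abs_of_nonneg (by linarith)]; linarith
        rw [max_eq_left (by linarith)]; ring
  · -- 0 < x
    refine lt_of_le_of_ne (fun s => hxnonneg s) ?_
    intro h
    have := congrFun (congrArg DFunLike.coe h) ⟨p, hpmem⟩
    rw [hxp] at this
    simp at this
    linarith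
  · -- x ≤ b i
    intro i
    rw [ContinuousMap.le_def]
    intro s
    rcases le_or_gt δ |(s:ℝ) - p| with h | h
    · rw [hxval, max_eq_left (by linarith)]
      simpa using (hpos i).le s
    · have h1 : x s ≤ ε := by
        rw [hxval]
        have : max 0 (δ - |(s:ℝ) - p|) ≤ δ :=
          max_le hδpos.le (by linarith [abs_nonneg ((s:ℝ) - p)])
        calc (ε / δ) * max 0 (δ - |(s:ℝ) - p|) ≤ (ε / δ) * δ := by
              apply mul_le_mul_of_nonneg_left this (by positivity)
          _ = ε := by field_simp
      have h2 : ε < g s := hkey s h.le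
      have h3 : g s ≤ b i s := hg_le i s
      linarith
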